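/- Let N be a pure Nash equilibrium of the game induced by ACOORD with parameter p ≥ 1 and O any assignment. Then (∑_j L(N_j)^{p+1})^{1/(p+1)} ≤ e(p+1)·m^{1/(p+1)}·max_j L(O_j). -/

import Mathlib

/-- The minimum load of job `i` over all machines. -/
noncomputable def wmin {n m : ℕ} (w : Fin n → Fin m → ℝ) (i : Fin n) : ℝ :=
  sInf (Set.range (w i))

/-- The inefficiency of job `i` on machine `j`. -/
noncomputable def rho {n m : ℕ} (w : Fin n → Fin m → ℝ) (i : Fin n) (j : Fin m) : ℝ :=
  w i j / wmin w i

/-- The load of machine `j` under assignment `N`. -/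
noncomputable def load {n m : ℕ} (w : Fin n → Fin m → ℝ) (N : Fin n → Fin m) (j : Fin m) : ℝ :=
  ∑ i ∈ Finset.univ.filter (fun i => N i = j), w i j

/-- The load on machine `j` of jobs with ID at most `i` under assignment `N`. -/
noncomputable def loadPre {n m : ℕ} (w : Fin n → Fin m → ℝ) (N : Fin n → Fin m)
    (i : Fin n) (j : Fin m) : ℝ :=
  ∑ i' ∈ Finset.univ.filter (fun i' => N i' = j ∧ i' ≤ i), w i' j

/-- The completion time of job `i` under assignment `N` with the ACOORD mechanism. -/
noncomputable def Acost {n m : ℕ} (p : ℕ) (w : Fin n → Fin m → ℝ)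
    (N : Fin n → Fin m) (i : Fin n) : ℝ :=
  rho w i (N i) ^ ((1 : ℝ) / p) * loadPre w N i (N i)

/-- `N` is a pure Nash equilibrium of the game induced by ACOORD. -/
def isNashA {n m : ℕ} (p : ℕ) (w : Fin n → Fin m → ℝ) (N : Fin n → Fin m) : Prop :=
  ∀ (i : Fin n) (j : Fin m), Acost p w N i ≤ Acost p w (Function.update N i j) i

lemma pow_sub_pow_le_aux (p : ℕ) {a b : ℝ} (hb : 0 ≤ b) (hab : b ≤ a) :
    a ^ (p+1) - b ^ (p+1) ≤ ((p:ℝ)+1) * (a - b) * a ^ p := by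
  have ha : 0 ≤ a := hb.trans hab
  rw [← geom_sum₂_mul a b (p+1)]
  have hS : (∑ i ∈ Finset.range (p+1), a ^ i * b ^ (p+1-1-i)) ≤ ((p:ℝ)+1) * a ^ p := by
    calc (∑ i ∈ Finset.range (p+1), a ^ i * b ^ (p+1-1-i))
        ≤ ∑ _i ∈ Finset.range (p+1), a ^ p := by
          apply Finset.sum_le_sum
          intro i hi
          have hi' : i ≤ p := Nat.lt_succ_iff.mp (Finset.mem_range.mp hi)
          calc a ^ i * b ^ (p+1-1-i) ≤ a ^ i * a ^ (p+1-1-i) :=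
                mul_le_mul_of_nonneg_left (pow_le_pow_left₀ hb hab _) (pow_nonneg ha _)
            _ = a ^ p := by rw [← pow_add]; congr 1; omega
      _ = ((p:ℝ)+1) * a ^ p := by
          rw [Finset.sum_const, Finset.card_range, nsmul_eq_mul]; push_cast; ring
  calc (∑ i ∈ Finset.range (p+1), a ^ i * b ^ (p+1-1-i)) * (a - b)
      ≤ (((p:ℝ)+1) * a ^ p) * (a - b) := mul_le_mul_of_nonneg_right hS (by linarith)
    _ = ((p:ℝ)+1) * (a - b) * a ^ p := by ring

lemma partial_sum_pow_le {n : ℕ} (p : ℕ) (f : Fin n → ℝ) (hf : ∀ i, 0 ≤ f i)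
    (s : Finset (Fin n)) :
    (∑ i ∈ s, f i) ^ (p+1) ≤ ((p:ℝ)+1) * ∑ i ∈ s, f i * (∑ i' ∈ s.filter (· ≤ i), f i') ^ p := by
  induction s using Finset.induction_on_max with
  | empty => simp
  | insert a s ha ih =>
    have hanotmem : a ∉ s := fun h => lt_irrefl a (ha a h)
    have hins : ∀ i ∈ s, (insert a s).filter (· ≤ i) = s.filter (· ≤ i) := by
      intro i hi
      rw [Finset.filter_insert, if_neg]
      exact not_le.mpr (ha i hi)
    have hfa : (insert a s).filter (· ≤ a) = insert a s := by
      apply Finset.filter_true_of_mem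
      intro x hx
      rcases Finset.mem_insert.mp hx with h | h
      · exact le_of_eq h
      · exact (ha x h).le
    have hcong : ∑ i ∈ s, f i * (∑ i' ∈ (insert a s).filter (· ≤ i), f i') ^ p
        = ∑ i ∈ s, f i * (∑ i' ∈ s.filter (· ≤ i), f i') ^ p :=
      Finset.sum_congr rfl (fun i hi => by rw [hins i hi])
    have ht : 0 ≤ ∑ i ∈ s, f i := Finset.sum_nonneg (fun i _ => hf i)
    set t := ∑ i ∈ s, f i with htdef
    have hrw : ∑ i ∈ insert a s, f i * (∑ i' ∈ (insert a s).filter (· ≤ i), f i') ^ p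
        = f a * (f a + t) ^ p + ∑ i ∈ s, f i * (∑ i' ∈ s.filter (· ≤ i), f i') ^ p := by
      rw [Finset.sum_insert hanotmem, hfa, Finset.sum_insert hanotmem, hcong]
    have hsum : ∑ i ∈ insert a s, f i = f a + t := Finset.sum_insert hanotmem
    rw [hrw, hsum]
    have key := pow_sub_pow_le_aux p ht (by linarith [hf a] : t ≤ f a + t)
    have key' : (f a + t) ^ (p+1) - t ^ (p+1) ≤ ((p:ℝ)+1) * f a * (f a + t) ^ p := by
      have h2 : f a + t - t = f a := by ring
      rw [h2] at key
      exact key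
    calc (f a + t) ^ (p+1)
        ≤ ((p:ℝ)+1) * f a * (f a + t) ^ p + t ^ (p+1) := by linarith
      _ ≤ ((p:ℝ)+1) * f a * (f a + t) ^ p
            + ((p:ℝ)+1) * ∑ i ∈ s, f i * (∑ i' ∈ s.filter (· ≤ i), f i') ^ p := by linarith
      _ = ((p:ℝ)+1) * (f a * (f a + t) ^ p
            + ∑ i ∈ s, f i * (∑ i' ∈ s.filter (· ≤ i), f i') ^ p) := by ring

lemma wmin_pos {n m : ℕ} (hm : 0 < m) (w : Fin n → Fin m → ℝ)
    (hw : ∀ i j, 0 < w i j) (i : Fin n) : 0 < wmin w i := by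
  have hne : (Set.range (w i)).Nonempty := ⟨w i ⟨0, hm⟩, Set.mem_range_self _⟩
  obtain ⟨j, hj⟩ := hne.csInf_mem (Set.finite_range _)
  have h2 : wmin w i = w i j := hj.symm
  rw [h2]; exact hw i j

lemma loadPre_update_le {n m : ℕ} (w : Fin n → Fin m → ℝ) (hw : ∀ i j, 0 < w i j)
    (N : Fin n → Fin m) (i : Fin n) (j : Fin m) :
    loadPre w (Function.update N i j) i j ≤ load w N j + w i j := by
  classical
  unfold loadPre load
  set A := Finset.univ.filter (fun i' => Function.update N i j i' = j ∧ i' ≤ i) with hA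
  have hiA : i ∈ A := by simp [hA, Function.update_self]
  rw [← Finset.sum_erase_add A _ hiA]
  apply add_le_add_left
  apply Finset.sum_le_sum_of_subset_of_nonneg
  · intro x hx
    obtain ⟨hxne, hxA⟩ := Finset.mem_erase.mp hx
    have hx2 := (Finset.mem_filter.mp hxA).2.1
    rw [Function.update_of_ne hxne] at hx2
    exact Finset.mem_filter.mpr ⟨Finset.mem_univ _, hx2⟩
  · intro x _ _; exact (hw x j).le

lemma nash_pow {n m : ℕ} (p : ℕ) (hp : 1 ≤ p) (hm : 0 < m)
    (w : Fin n → Fin m → ℝ) (hw : ∀ i j, 0 < w i j)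
    (N O : Fin n → Fin m) (hN : isNashA p w N) (i : Fin n) :
    w i (N i) * loadPre w N i (N i) ^ p ≤
      w i (O i) * (load w N (O i) + w i (O i)) ^ p := by
  have hpR : ((p:ℝ)) ≠ 0 := Nat.cast_ne_zero.mpr (by omega)
  have hwmin := wmin_pos hm w hw i
  have hNi := hN i (O i)
  unfold Acost at hNi
  rw [Function.update_self] at hNi
  have hb := loadPre_update_le w hw N i (O i)
  have hrhoO : 0 ≤ rho w i (O i) ^ ((1:ℝ)/p) :=
    Real.rpow_nonneg (le_of_lt (div_pos (hw i (O i)) hwmin)) _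
  have h2 : rho w i (N i) ^ ((1:ℝ)/p) * loadPre w N i (N i) ≤
      rho w i (O i) ^ ((1:ℝ)/p) * (load w N (O i) + w i (O i)) :=
    hNi.trans (mul_le_mul_of_nonneg_left hb hrhoO)
  have hckey : ∀ j, wmin w i ^ ((1:ℝ)/p) * rho w i j ^ ((1:ℝ)/p) = w i j ^ ((1:ℝ)/p) := by
    intro j
    rw [rho, Real.div_rpow (le_of_lt (hw i j)) hwmin.le]
    rw [mul_div_cancel₀ _ (ne_of_gt (Real.rpow_pos_of_pos hwmin _))]
  have h3 : w i (N i) ^ ((1:ℝ)/p) * loadPre w N i (N i) ≤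
      w i (O i) ^ ((1:ℝ)/p) * (load w N (O i) + w i (O i)) := by
    have hm2 := mul_le_mul_of_nonneg_left h2 (Real.rpow_nonneg hwmin.le ((1:ℝ)/p))
    calc w i (N i) ^ ((1:ℝ)/p) * loadPre w N i (N i)
        = wmin w i ^ ((1:ℝ)/p) * (rho w i (N i) ^ ((1:ℝ)/p) * loadPre w N i (N i)) := by
          rw [← mul_assoc, hckey]
      _ ≤ wmin w i ^ ((1:ℝ)/p) * (rho w i (O i) ^ ((1:ℝ)/p) * (load w N (O i) + w i (O i))) := hm2
      _ = w i (O i) ^ ((1:ℝ)/p) * (load w N (O i) + w i (O i)) := by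
          rw [← mul_assoc, hckey]
  have hLnonneg : 0 ≤ loadPre w N i (N i) := Finset.sum_nonneg fun i' _ => (hw i' _).le
  have hLHSnn : 0 ≤ w i (N i) ^ ((1:ℝ)/p) * loadPre w N i (N i) :=
    mul_nonneg (Real.rpow_nonneg (hw i (N i)).le _) hLnonneg
  have h4 := pow_le_pow_left₀ hLHSnn h3 p
  have hru : ∀ x : ℝ, 0 < x → (x ^ ((1:ℝ)/p)) ^ p = x := by
    intro x hx
    rw [← Real.rpow_natCast (x ^ ((1:ℝ)/p)) p, ← Real.rpow_mul hx.le, one_div,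
      inv_mul_cancel₀ hpR, Real.rpow_one]
  rw [mul_pow, mul_pow, hru _ (hw i (N i)), hru _ (hw i (O i))] at h4
  exact h4

lemma final_step (p : ℕ) (A B : ℝ) (hB : 0 ≤ B)
    (h : A ^ (p+1) ≤ ((p:ℝ)+1) * B * (A+B) ^ p) : A ≤ Real.exp 1 * ((p:ℝ)+1) * B := by
  by_contra hcon
  push_neg at hcon
  have he1 : (1:ℝ) ≤ Real.exp 1 := by
    have := Real.add_one_le_exp (1:ℝ); linarith
  have hp1 : (0:ℝ) < (p:ℝ)+1 := by positivity
  set c := Real.exp 1 * ((p:ℝ)+1) with hc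
  have hcpos : 0 < c := by positivity
  have hApos : 0 < A := lt_of_le_of_lt (by positivity : (0:ℝ) ≤ c * B) hcon
  have hBlt : B < A / c := by rw [lt_div_iff₀ hcpos]; nlinarith
  have hpc : (p:ℝ) ≤ c := by
    calc (p:ℝ) ≤ (p:ℝ)+1 := by linarith
      _ = 1 * ((p:ℝ)+1) := (one_mul _).symm
      _ ≤ Real.exp 1 * ((p:ℝ)+1) := mul_le_mul_of_nonneg_right he1 hp1.le
  have hpow : ((1:ℝ) + 1/c) ^ p ≤ Real.exp 1 := by
    calc ((1:ℝ)+1/c) ^ p ≤ (Real.exp (1/c)) ^ p := by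
          apply pow_le_pow_left₀ (by positivity)
          have := Real.add_one_le_exp (1/c); linarith
      _ = Real.exp ((p:ℕ) * (1/c)) := (Real.exp_nat_mul _ p).symm
      _ ≤ Real.exp 1 := by
          apply Real.exp_le_exp.mpr
          rw [mul_one_div]
          exact (div_le_one hcpos).mpr hpc
  have hAB : (A + B) ^ p ≤ A ^ p * ((1:ℝ) + 1/c) ^ p := by
    rw [← mul_pow]
    apply pow_le_pow_left₀ (by positivity)
    have hr : A * (1 + 1/c) = A + A/c := by ring
    rw [hr]; linarith
  have hXpos : (0:ℝ) < A ^ p * Real.exp 1 := by positivity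
  have hfin : ((p:ℝ)+1) * B * (A+B) ^ p < A ^ (p+1) := by
    calc ((p:ℝ)+1) * B * (A+B) ^ p
        ≤ ((p:ℝ)+1) * B * (A ^ p * ((1:ℝ) + 1/c) ^ p) :=
          mul_le_mul_of_nonneg_left hAB (by positivity)
      _ ≤ ((p:ℝ)+1) * B * (A ^ p * Real.exp 1) := by
          apply mul_le_mul_of_nonneg_left _ (by positivity)
          exact mul_le_mul_of_nonneg_left hpow (by positivity)
      _ < ((p:ℝ)+1) * (A/c) * (A ^ p * Real.exp 1) := by
          apply mul_lt_mul_of_pos_right _ hXpos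
          exact mul_lt_mul_of_pos_left hBlt hp1
      _ = A ^ (p+1) := by
          rw [hc, pow_succ]
          have hexp : Real.exp 1 ≠ 0 := by positivity
          field_simp
  linarith

theorem stmt_12 (n m : ℕ) (p : ℕ) (hp : 1 ≤ p) (hm : 0 < m)
    (w : Fin n → Fin m → ℝ) (hw : ∀ i j, 0 < w i j)
    (N O : Fin n → Fin m) (hN : isNashA p w N) :
    (∑ j, load w N j ^ (p + 1)) ^ ((1 : ℝ) / (p + 1)) ≤
      Real.exp 1 * (p + 1) * (m : ℝ) ^ ((1 : ℝ) / (p + 1)) *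
        Finset.univ.sup' ⟨⟨0, hm⟩, Finset.mem_univ _⟩ (load w O) := by
  classical
  have hpRpos : (0:ℝ) < (p:ℝ) := by exact_mod_cast Nat.lt_of_lt_of_le Nat.zero_lt_one hp
  have hp1 : (0:ℝ) < (p:ℝ)+1 := by positivity
  set M := Finset.univ.sup' ⟨⟨0, hm⟩, Finset.mem_univ _⟩ (load w O) with hMdef
  have hLOnn : ∀ j, (0:ℝ) ≤ load w O j := fun j => Finset.sum_nonneg fun i _ => (hw i j).le
  have hLNnn : ∀ j, (0:ℝ) ≤ load w N j := fun j => Finset.sum_nonneg fun i _ => (hw i j).le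
  have hLOle : ∀ j, load w O j ≤ M := fun j => Finset.le_sup' _ (Finset.mem_univ j)
  have hMnn : 0 ≤ M := le_trans (hLOnn ⟨0,hm⟩) (hLOle _)
  set S := ∑ j, load w N j ^ (p+1) with hSdef
  have hSnn : 0 ≤ S := Finset.sum_nonneg fun j _ => pow_nonneg (hLNnn j) _
  set A := S ^ ((1:ℝ)/((p:ℝ)+1)) with hAdef
  set B := (m:ℝ) ^ ((1:ℝ)/((p:ℝ)+1)) * M with hBdef
  have hBnn : 0 ≤ B := by
    rw [hBdef]; exact mul_nonneg (Real.rpow_nonneg (Nat.cast_nonneg m) _) hMnn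
  -- Step 1
  have step1 : S ≤ ((p:ℝ)+1) * ∑ i, w i (N i) * loadPre w N i (N i) ^ p := by
    have hfib : ∀ j : Fin m, load w N j ^ (p+1) ≤
        ((p:ℝ)+1) * ∑ i ∈ Finset.univ.filter (fun i => N i = j),
          w i (N i) * loadPre w N i (N i) ^ p := by
      intro j
      have hpart := partial_sum_pow_le p (fun i => w i j) (fun i => (hw i j).le)
        (Finset.univ.filter (fun i => N i = j))
      beta_reduce at hpart
      have heq : ∑ i ∈ Finset.univ.filter (fun i => N i = j),
            w i j * (∑ i' ∈ (Finset.univ.filter (fun i => N i = j)).filter (· ≤ i), w i' j) ^ p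
          = ∑ i ∈ Finset.univ.filter (fun i => N i = j),
            w i (N i) * loadPre w N i (N i) ^ p := by
        apply Finset.sum_congr rfl
        intro i hi
        have hNij : N i = j := by
          have := (Finset.mem_filter.mp hi).2
          exact this
        rw [hNij]
        unfold loadPre
        rw [Finset.filter_filter]
      rw [heq] at hpart
      exact hpart
    calc S = ∑ j, load w N j ^ (p+1) := hSdef
      _ ≤ ∑ j, ((p:ℝ)+1) * ∑ i ∈ Finset.univ.filter (fun i => N i = j),
            w i (N i) * loadPre w N i (N i) ^ p := Finset.sum_le_sum fun j _ => hfib j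
      _ = ((p:ℝ)+1) * ∑ j, ∑ i ∈ Finset.univ.filter (fun i => N i = j),
            w i (N i) * loadPre w N i (N i) ^ p := (Finset.mul_sum _ _ _).symm
      _ = ((p:ℝ)+1) * ∑ i, w i (N i) * loadPre w N i (N i) ^ p := by
          rw [Finset.sum_fiberwise]
  -- Step 2
  have step2 : ∑ i, w i (N i) * loadPre w N i (N i) ^ p ≤
      ∑ i, w i (O i) * (load w N (O i) + load w O (O i)) ^ p := by
    apply Finset.sum_le_sum
    intro i _
    refine (nash_pow p hp hm w hw N O hN i).trans ?_
    have h1 : w i (O i) ≤ load w O (O i) := by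
      apply Finset.single_le_sum (f := fun i' => w i' (O i)) (fun i' _ => (hw i' _).le)
      simp
    have hbase : (0:ℝ) ≤ load w N (O i) + w i (O i) := by
      have := hLNnn (O i); have := (hw i (O i)).le; linarith
    exact mul_le_mul_of_nonneg_left
      (pow_le_pow_left₀ hbase (add_le_add_right h1 _) p) (hw i (O i)).le
  -- Step 3
  have step3 : ∑ i, w i (O i) * (load w N (O i) + load w O (O i)) ^ p
      = ∑ j, load w O j * (load w N j + load w O j) ^ p := by
    rw [← Finset.sum_fiberwise Finset.univ O
      (fun i => w i (O i) * (load w N (O i) + load w O (O i)) ^ p)]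
    apply Finset.sum_congr rfl
    intro j _
    calc ∑ i ∈ Finset.univ.filter (fun i => O i = j),
          w i (O i) * (load w N (O i) + load w O (O i)) ^ p
        = ∑ i ∈ Finset.univ.filter (fun i => O i = j),
          w i j * (load w N j + load w O j) ^ p := by
          apply Finset.sum_congr rfl
          intro i hi
          rw [(Finset.mem_filter.mp hi).2]
      _ = (∑ i ∈ Finset.univ.filter (fun i => O i = j), w i j)
            * (load w N j + load w O j) ^ p := (Finset.sum_mul _ _ _).symm
      _ = load w O j * (load w N j + load w O j) ^ p := rfl
  -- Step 4
  have step4 : ∑ j, load w O j * (load w N j + load w O j) ^ p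
      ≤ M * ∑ j, (load w N j + M) ^ p := by
    rw [Finset.mul_sum]
    apply Finset.sum_le_sum
    intro j _
    have hb1 : (0:ℝ) ≤ load w N j + load w O j := by
      have := hLNnn j; have := hLOnn j; linarith
    exact mul_le_mul (hLOle j)
      (pow_le_pow_left₀ hb1 (add_le_add_right (hLOle j) _) p)
      (pow_nonneg hb1 p) hMnn
  -- Hölder
  have hconj : ((p:ℝ)+1).HolderConjugate (((p:ℝ)+1)/p) := by
    rw [Real.holderConjugate_iff]
    constructor
    · linarith
    · have h1 : (p:ℝ)+1 ≠ 0 := by positivity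
      have h2 : (p:ℝ) ≠ 0 := by positivity
      rw [inv_div]
      field_simp
      ring
  have step5 : ∑ j, (load w N j + M) ^ p ≤
      (m:ℝ) ^ ((1:ℝ)/((p:ℝ)+1)) * (∑ j, (load w N j + M) ^ (p+1)) ^ ((p:ℝ)/((p:ℝ)+1)) := by
    have h := Real.inner_le_Lp_mul_Lq_of_nonneg Finset.univ
      (f := fun _ : Fin m => (1:ℝ)) (g := fun j => (load w N j + M) ^ p) hconj
      (fun i _ => zero_le_one) (fun j _ => pow_nonneg (by linarith [hLNnn j]) p)
    simp only [one_mul, Real.one_rpow, Finset.sum_const, Finset.card_univ,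
      Fintype.card_fin, nsmul_eq_mul, mul_one] at h
    have e2 : ∀ j : Fin m, ((load w N j + M) ^ p : ℝ) ^ (((p:ℝ)+1)/p) = (load w N j + M) ^ (p+1) := by
      intro j
      have hb : (0:ℝ) ≤ load w N j + M := by linarith [hLNnn j]
      rw [← Real.rpow_natCast (load w N j + M) p, ← Real.rpow_mul hb]
      rw [show (p:ℝ) * (((p:ℝ)+1)/p) = ((p+1:ℕ):ℝ) by push_cast; field_simp]
      exact Real.rpow_natCast _ (p+1)
    have e3 : (1:ℝ)/(((p:ℝ)+1)/p) = (p:ℝ)/((p:ℝ)+1) := one_div_div _ _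
    have e4 : (∑ j, ((load w N j + M) ^ p : ℝ) ^ (((p:ℝ)+1)/p))
        = ∑ j, (load w N j + M) ^ (p+1) := Finset.sum_congr rfl (fun j _ => e2 j)
    rw [e3, e4] at h
    exact h
  -- Minkowski
  have hXnn : (0:ℝ) ≤ ∑ j, (load w N j + M) ^ (p+1) :=
    Finset.sum_nonneg fun j _ => pow_nonneg (by linarith [hLNnn j]) _
  have cast1 : ∀ x : ℝ, x ^ ((p:ℝ)+1) = x ^ (p+1) := by
    intro x
    rw [show (p:ℝ)+1 = ((p+1:ℕ):ℝ) by push_cast; ring]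
    exact Real.rpow_natCast x (p+1)
  have step6 : (∑ j, (load w N j + M) ^ (p+1)) ^ ((1:ℝ)/((p:ℝ)+1)) ≤ A + B := by
    have h := Real.Lp_add_le Finset.univ (load w N) (fun _ => M) (p := (p:ℝ)+1) (by linarith)
    beta_reduce at h
    have e5 : (∑ j, |load w N j + M| ^ ((p:ℝ)+1)) = ∑ j, (load w N j + M) ^ (p+1) :=
      Finset.sum_congr rfl fun j _ => by
        rw [abs_of_nonneg (by linarith [hLNnn j] : (0:ℝ) ≤ load w N j + M), cast1]
    have e6 : (∑ j, |load w N j| ^ ((p:ℝ)+1)) = S :=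
      Finset.sum_congr rfl fun j _ => by rw [abs_of_nonneg (hLNnn j), cast1]
    have e7 : (∑ _j : Fin m, |M| ^ ((p:ℝ)+1)) = (m:ℝ) * M ^ (p+1) := by
      rw [Finset.sum_const, Finset.card_univ, Fintype.card_fin, nsmul_eq_mul,
        abs_of_nonneg hMnn, cast1]
    rw [e5, e6, e7] at h
    have e8 : ((m:ℝ) * M ^ (p+1)) ^ ((1:ℝ)/((p:ℝ)+1)) = (m:ℝ) ^ ((1:ℝ)/((p:ℝ)+1)) * M := by
      rw [Real.mul_rpow (Nat.cast_nonneg m) (pow_nonneg hMnn _)]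
      congr 1
      rw [← Real.rpow_natCast M (p+1), ← Real.rpow_mul hMnn]
      rw [show ((p+1:ℕ):ℝ) * ((1:ℝ)/((p:ℝ)+1)) = 1 by push_cast; field_simp]
      exact Real.rpow_one M
    rw [e8] at h
    rw [hAdef, hBdef]
    exact h
  have step7 : (∑ j, (load w N j + M) ^ (p+1)) ^ ((p:ℝ)/((p:ℝ)+1)) ≤ (A+B) ^ p := by
    have e9 : (∑ j, (load w N j + M) ^ (p+1)) ^ ((p:ℝ)/((p:ℝ)+1))
        = ((∑ j, (load w N j + M) ^ (p+1)) ^ ((1:ℝ)/((p:ℝ)+1))) ^ p := by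
      rw [← Real.rpow_natCast ((∑ j, (load w N j + M) ^ (p+1)) ^ ((1:ℝ)/((p:ℝ)+1))) p,
        ← Real.rpow_mul hXnn]
      congr 1
      rw [one_div, inv_mul_eq_div]
    rw [e9]
    exact pow_le_pow_left₀ (Real.rpow_nonneg hXnn _) step6 p
  -- assemble
  have hApow : A ^ (p+1) = S := by
    rw [hAdef, ← Real.rpow_natCast (S ^ ((1:ℝ)/((p:ℝ)+1))) (p+1), ← Real.rpow_mul hSnn]
    rw [show ((1:ℝ)/((p:ℝ)+1)) * ((p+1:ℕ):ℝ) = 1 by push_cast; field_simp]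
    exact Real.rpow_one S
  have hkey : A ^ (p+1) ≤ ((p:ℝ)+1) * B * (A+B) ^ p := by
    rw [hApow]
    calc S ≤ ((p:ℝ)+1) * ∑ i, w i (N i) * loadPre w N i (N i) ^ p := step1
      _ ≤ ((p:ℝ)+1) * ∑ i, w i (O i) * (load w N (O i) + load w O (O i)) ^ p :=
          mul_le_mul_of_nonneg_left step2 (by positivity)
      _ = ((p:ℝ)+1) * ∑ j, load w O j * (load w N j + load w O j) ^ p := by rw [step3]
      _ ≤ ((p:ℝ)+1) * (M * ∑ j, (load w N j + M) ^ p) :=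
          mul_le_mul_of_nonneg_left step4 (by positivity)
      _ ≤ ((p:ℝ)+1) * (M * ((m:ℝ) ^ ((1:ℝ)/((p:ℝ)+1))
            * (∑ j, (load w N j + M) ^ (p+1)) ^ ((p:ℝ)/((p:ℝ)+1)))) := by
          apply mul_le_mul_of_nonneg_left _ (by positivity)
          exact mul_le_mul_of_nonneg_left step5 hMnn
      _ ≤ ((p:ℝ)+1) * (M * ((m:ℝ) ^ ((1:ℝ)/((p:ℝ)+1)) * (A+B) ^ p)) := by
          apply mul_le_mul_of_nonneg_left _ (by positivity)
          apply mul_le_mul_of_nonneg_left _ hMnn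
          exact mul_le_mul_of_nonneg_left step7 (by positivity)
      _ = ((p:ℝ)+1) * B * (A+B) ^ p := by rw [hBdef]; ring
  have hfinal := final_step p A B hBnn hkey
  rw [hBdef] at hfinal
  calc A ≤ Real.exp 1 * ((p:ℝ)+1) * ((m:ℝ) ^ ((1:ℝ)/((p:ℝ)+1)) * M) := hfinal
    _ = Real.exp 1 * ((p:ℝ)+1) * (m:ℝ) ^ ((1:ℝ)/((p:ℝ)+1)) * M := by ring
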